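/- Fix t > u > 0. Then the function μ ↦ sinh(tμ)/sinh(uμ) is monotonically increasing on (0, ∞). -/

import Mathlib

private lemma cothAux : StrictMonoOn (fun x : ℝ => x * Real.cosh x / Real.sinh x) (Set.Ioi 0) := by
  apply strictMonoOn_of_deriv_pos (convex_Ioi 0)
  · apply ContinuousOn.div
    · exact (continuous_id.mul Real.continuous_cosh).continuousOn
    · exact Real.continuous_sinh.continuousOn
    · intro x hx; exact ne_of_gt (Real.sinh_pos_iff.2 hx)
  · intro x hx
    rw [interior_Ioi] at hx
    have hxpos : (0:ℝ) < x := hx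
    have hsp : 0 < Real.sinh x := Real.sinh_pos_iff.2 hxpos
    have hs : Real.sinh x ≠ 0 := ne_of_gt hsp
    have hd : HasDerivAt (fun x : ℝ => x * Real.cosh x / Real.sinh x)
        (((1 * Real.cosh x + x * Real.sinh x) * Real.sinh x - x * Real.cosh x * Real.cosh x)
          / Real.sinh x ^ 2) x :=
      ((hasDerivAt_id x).mul (Real.hasDerivAt_cosh x)).div (Real.hasDerivAt_sinh x) hs
    rw [hd.deriv]
    have hpyth := Real.cosh_sq_sub_sinh_sq x
    have h2 : x < Real.sinh x * Real.cosh x := by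
      have h1 : 2 * x < Real.sinh (2 * x) := Real.self_lt_sinh_iff.2 (by linarith)
      rw [Real.sinh_two_mul] at h1
      linarith
    have hnum : 0 < (1 * Real.cosh x + x * Real.sinh x) * Real.sinh x
        - x * Real.cosh x * Real.cosh x := by nlinarith
    positivity

theorem stmt5 (t u : ℝ) (hu : 0 < u) (hut : u < t) :
    StrictMonoOn (fun μ : ℝ => Real.sinh (t * μ) / Real.sinh (u * μ)) (Set.Ioi 0) := by
  have ht : 0 < t := hu.trans hut
  apply strictMonoOn_of_deriv_pos (convex_Ioi 0)
  · apply ContinuousOn.div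
    · exact (Real.continuous_sinh.comp (continuous_const.mul continuous_id)).continuousOn
    · exact (Real.continuous_sinh.comp (continuous_const.mul continuous_id)).continuousOn
    · intro x hx; exact ne_of_gt (Real.sinh_pos_iff.2 (mul_pos hu hx))
  · intro x hx
    rw [interior_Ioi] at hx
    have hxpos : (0:ℝ) < x := hx
    have hsu : 0 < Real.sinh (u * x) := Real.sinh_pos_iff.2 (mul_pos hu hxpos)
    have hst : 0 < Real.sinh (t * x) := Real.sinh_pos_iff.2 (mul_pos ht hxpos)
    have hdt : HasDerivAt (fun μ : ℝ => Real.sinh (t * μ)) (Real.cosh (t * x) * t) x := by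
      have := (Real.hasDerivAt_sinh (t * x)).comp x ((hasDerivAt_id x).const_mul t)
      exact this.congr_deriv (by simp)
    have hdu : HasDerivAt (fun μ : ℝ => Real.sinh (u * μ)) (Real.cosh (u * x) * u) x := by
      have := (Real.hasDerivAt_sinh (u * x)).comp x ((hasDerivAt_id x).const_mul u)
      exact this.congr_deriv (by simp)
    have hd := hdt.div hdu (ne_of_gt hsu)
    rw [show deriv (fun μ : ℝ => Real.sinh (t * μ) / Real.sinh (u * μ)) x = _ from hd.deriv]
    have key : u * x * Real.cosh (u * x) / Real.sinh (u * x)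
        < t * x * Real.cosh (t * x) / Real.sinh (t * x) := by
      have := cothAux (Set.mem_Ioi.2 (mul_pos hu hxpos)) (Set.mem_Ioi.2 (mul_pos ht hxpos))
        (mul_lt_mul_of_pos_right hut hxpos)
      simpa using this
    have hcu : 0 < Real.cosh (u * x) := Real.cosh_pos _
    have hct : 0 < Real.cosh (t * x) := Real.cosh_pos _
    have key2 : u * Real.cosh (u * x) * Real.sinh (t * x)
        < t * Real.cosh (t * x) * Real.sinh (u * x) := by
      rw [div_lt_div_iff₀ hsu hst] at key
      have : u * x * Real.cosh (u * x) * Real.sinh (t * x)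
          < t * x * Real.cosh (t * x) * Real.sinh (u * x) := key
      nlinarith
    have hnum : 0 < Real.cosh (t * x) * t * Real.sinh (u * x)
        - Real.sinh (t * x) * (Real.cosh (u * x) * u) := by nlinarith
    positivity
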